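/- Consider the token-selection procedure: given a distribution D on a finite set V, a function h : V → {0,1}, and a uniformly random bit c independent of everything else, draw independent t₀, t₁ ~ D; if h(t₀) ≠ h(t₁), output the tᵦ with h(tᵦ) = c; otherwise output t₀ or t₁ each with probability 1/2. Then for every t* ∈ V, the probability that the output equals t* is exactly D(t*). -/
import Mathlib


/-- The token-selection procedure (draw independent `t₀ t₁ ~ D`; given a uniformly
random bit `c`, if `h t₀ ≠ h t₁` output the sample hashing to `c`, otherwise output
a uniformly random one of the two) outputs each `t*` with probability exactly `D t*`. -/
theorem embedding_preserves_distribution {V : Type*} [Fintype V] [DecidableEq V]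
    (D : V → ℝ) (hpos : ∀ x, 0 ≤ D x) (hsum : ∑ x, D x = 1)
    (h : V → Bool) (tstar : V) :
    (∑ t₀, ∑ t₁, D t₀ * D t₁ * ((1 / 2 : ℝ) * ∑ c : Bool,
      (if h t₀ ≠ h t₁ then
        (if (if h t₀ = c then t₀ else t₁) = tstar then (1 : ℝ) else 0)
      else
        (1 / 2) * ((if t₀ = tstar then (1 : ℝ) else 0) +
                   (if t₁ = tstar then (1 : ℝ) else 0))))) = D tstar := by
  have key : ∀ t₀ t₁ : V, D t₀ * D t₁ * ((1 / 2 : ℝ) * ∑ c : Bool,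
      (if h t₀ ≠ h t₁ then
        (if (if h t₀ = c then t₀ else t₁) = tstar then (1 : ℝ) else 0)
      else
        (1 / 2) * ((if t₀ = tstar then (1 : ℝ) else 0) +
                   (if t₁ = tstar then (1 : ℝ) else 0)))) =
      1/2 * ((if t₀ = tstar then D t₀ else 0) * D t₁) +
      1/2 * (D t₀ * (if t₁ = tstar then D t₁ else 0)) := by
    intro t₀ t₁
    have inner : ((1 / 2 : ℝ) * ∑ c : Bool,
      (if h t₀ ≠ h t₁ then
        (if (if h t₀ = c then t₀ else t₁) = tstar then (1 : ℝ) else 0)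
      else
        (1 / 2) * ((if t₀ = tstar then (1 : ℝ) else 0) +
                   (if t₁ = tstar then (1 : ℝ) else 0)))) =
      (1/2 : ℝ) * ((if t₀ = tstar then (1:ℝ) else 0) + (if t₁ = tstar then (1:ℝ) else 0)) := by
      congr 1
      rw [Fintype.sum_bool]
      by_cases hne : h t₀ = h t₁ <;> simp [hne]
      · ring
      · cases hb : h t₀ <;> cases hb1 : h t₁ <;> simp_all <;> ring
    rw [inner]
    by_cases h0 : t₀ = tstar <;> by_cases h1 : t₁ = tstar <;> simp [h0, h1] <;> ring
  simp only [key, Finset.sum_add_distrib, ← Finset.mul_sum, ← Finset.sum_mul, hsum,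
    Finset.sum_ite_eq', Finset.mem_univ, if_true]
  ring
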